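/- arXiv:2311.12444 — 5 statements merged into one kernel-verified Lean document; each statement's English description precedes it below -/
import Mathlib

section
/- For any two density matrices ρ and σ on a finite-dimensional complex Hilbert space, the trace distance satisfies T(ρ, σ) ≤ √(1 − Tr(ρσ)). -/
set_option maxHeartbeats 1000000

open scoped ComplexOrder

lemma psd_det_nonneg {m : Type*} [Fintype m] [DecidableEq m] {M : Matrix m m ℂ}
    (hM : M.PosSemidef) : 0 ≤ M.det := by
  exact hM.det_nonneg

lemma psd_diag_nonneg {n : ℕ} {M : Matrix (Fin n) (Fin n) ℂ} (hM : M.PosSemidef) (i : Fin n) :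
    0 ≤ (M i i).re ∧ (M i i).im = 0 := by
  have := psd_det_nonneg (hM.submatrix ![i])
  have h : (0:ℂ) ≤ M i i := by rw [Matrix.det_fin_one] at this; simpa using this
  rw [Complex.le_def] at h
  simpa using ⟨h.1, h.2.symm⟩

lemma psd_entry_sq_le {n : ℕ} {M : Matrix (Fin n) (Fin n) ℂ} (hM : M.PosSemidef) (i j : Fin n) :
    ‖M i j‖ ^ 2 ≤ (M i i).re * (M j j).re := by
  have hii := psd_diag_nonneg hM i
  have hjj := psd_diag_nonneg hM j
  by_cases hij : i = j
  · subst hij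
    have : M i i = ((M i i).re : ℂ) := by
      apply Complex.ext <;> simp [hii.2]
    rw [this]
    simp [Complex.norm_real, Real.norm_eq_abs, abs_of_nonneg hii.1, sq]
  · have hdet := psd_det_nonneg (hM.submatrix ![i, j])
    rw [Matrix.det_fin_two] at hdet
    simp only [Matrix.submatrix_apply, Matrix.cons_val_zero, Matrix.cons_val_one,
      Matrix.head_cons] at hdet
    rw [← hM.isHermitian.apply i j, Complex.star_def,
      ← Complex.normSq_eq_conj_mul_self, Complex.le_def] at hdet
    simp only [Complex.zero_re, Complex.sub_re, Complex.mul_re, Complex.ofReal_re] at hdet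
    have h1 := hdet.1
    rw [Complex.sq_norm]
    have h2 : Complex.normSq (M j i) = Complex.normSq (M i j) := by
      rw [← hM.isHermitian.apply i j, Complex.star_def, Complex.normSq_conj]
    nlinarith [hii.2, hjj.2, h1, h2]

lemma block_bound {n : ℕ} {M N : Matrix (Fin n) (Fin n) ℂ} (hM : M.PosSemidef)
    (hN : N.PosSemidef) (s t : Finset (Fin n)) :
    ∑ i ∈ s, ∑ j ∈ t, ‖M i j‖ * ‖N i j‖ ≤
      Real.sqrt (((∑ i ∈ s, (M i i).re) * (∑ j ∈ t, (M j j).re)) *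
        ((∑ i ∈ s, (N i i).re) * (∑ j ∈ t, (N j j).re))) := by
  rw [← Finset.sum_product']
  set f : Fin n × Fin n → ℝ := fun p => ‖M p.1 p.2‖
  set g : Fin n × Fin n → ℝ := fun p => ‖N p.1 p.2‖
  have hcs := Finset.sum_mul_sq_le_sq_mul_sq (s ×ˢ t) f g
  have hMs : ∑ p ∈ s ×ˢ t, f p ^ 2 ≤ (∑ i ∈ s, (M i i).re) * (∑ j ∈ t, (M j j).re) := by
    rw [Finset.sum_mul_sum, ← Finset.sum_product']
    exact Finset.sum_le_sum fun p _ => psd_entry_sq_le hM p.1 p.2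
  have hNs : ∑ p ∈ s ×ˢ t, g p ^ 2 ≤ (∑ i ∈ s, (N i i).re) * (∑ j ∈ t, (N j j).re) := by
    rw [Finset.sum_mul_sum, ← Finset.sum_product']
    exact Finset.sum_le_sum fun p _ => psd_entry_sq_le hN p.1 p.2
  have h0 : 0 ≤ ∑ p ∈ s ×ˢ t, f p * g p :=
    Finset.sum_nonneg fun p _ => mul_nonneg (norm_nonneg _) (norm_nonneg _)
  have hsq : (∑ p ∈ s ×ˢ t, f p * g p) ^ 2 ≤
      ((∑ i ∈ s, (M i i).re) * (∑ j ∈ t, (M j j).re)) *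
        ((∑ i ∈ s, (N i i).re) * (∑ j ∈ t, (N j j).re)) := by
    refine hcs.trans (mul_le_mul hMs hNs (Finset.sum_nonneg fun p _ => sq_nonneg _) ?_)
    exact le_trans (Finset.sum_nonneg fun p _ => sq_nonneg _) hMs
  calc ∑ p ∈ s ×ˢ t, f p * g p = Real.sqrt ((∑ p ∈ s ×ˢ t, f p * g p) ^ 2) :=
        (Real.sqrt_sq h0).symm
    _ ≤ _ := Real.sqrt_le_sqrt hsq

lemma scalar_ineq (a b : ℝ) (ha0 : 0 ≤ a) (ha1 : a ≤ 1) (hb0 : 0 ≤ b) (hb1 : b ≤ 1) :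
    Real.sqrt ((a*a)*(b*b)) + Real.sqrt ((a*(1-a))*(b*(1-b)))
      + Real.sqrt (((1-a)*a)*((1-b)*b)) + Real.sqrt (((1-a)*(1-a))*((1-b)*(1-b)))
      ≤ 1 - (a-b)^2 := by
  have ha0' : 0 ≤ 1 - a := by linarith
  have hb0' : 0 ≤ 1 - b := by linarith
  set p := Real.sqrt (a*(1-b)) with hpdef
  set q := Real.sqrt ((1-a)*b) with hqdef
  set r := Real.sqrt (a*(1-a)) with hrdef
  set s := Real.sqrt (b*(1-b)) with hsdef
  have hp0 : 0 ≤ p := Real.sqrt_nonneg _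
  have hq0 : 0 ≤ q := Real.sqrt_nonneg _
  have hr0 : 0 ≤ r := Real.sqrt_nonneg _
  have hs0 : 0 ≤ s := Real.sqrt_nonneg _
  have hp : p^2 = a*(1-b) := Real.sq_sqrt (mul_nonneg ha0 hb0')
  have hq : q^2 = (1-a)*b := Real.sq_sqrt (mul_nonneg ha0' hb0)
  have hr : r^2 = a*(1-a) := Real.sq_sqrt (mul_nonneg ha0 ha0')
  have hs : s^2 = b*(1-b) := Real.sq_sqrt (mul_nonneg hb0 hb0')
  have h1 : Real.sqrt ((a*a)*(b*b)) = a*b := by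
    rw [show (a*a)*(b*b) = (a*b)^2 by ring, Real.sqrt_sq (mul_nonneg ha0 hb0)]
  have h4 : Real.sqrt (((1-a)*(1-a))*((1-b)*(1-b))) = (1-a)*(1-b) := by
    rw [show ((1-a)*(1-a))*((1-b)*(1-b)) = ((1-a)*(1-b))^2 by ring,
      Real.sqrt_sq (mul_nonneg ha0' hb0')]
  have h2 : Real.sqrt ((a*(1-a))*(b*(1-b))) = p*q := by
    rw [show (a*(1-a))*(b*(1-b)) = (a*(1-b))*((1-a)*b) by ring,
      Real.sqrt_mul (mul_nonneg ha0 hb0')]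
  have h3 : Real.sqrt (((1-a)*a)*((1-b)*b)) = p*q := by
    rw [show ((1-a)*a)*((1-b)*b) = (a*(1-b))*((1-a)*b) by ring,
      Real.sqrt_mul (mul_nonneg ha0 hb0')]
  have hpqrs : p*q = r*s := by
    rw [hpdef, hqdef, hrdef, hsdef, ← Real.sqrt_mul (mul_nonneg ha0 hb0'),
      ← Real.sqrt_mul (mul_nonneg ha0 ha0')]
    ring_nf
  have hrs : 2*(r*s) ≤ r^2 + s^2 := by nlinarith [sq_nonneg (r-s)]
  have hsum : (p+q)^2 ≤ 1 := by nlinarith [sq_nonneg (a+b-1), hrs, hpqrs, hp, hq, hr, hs]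
  have key : (p^2-q^2)^2 ≤ (p-q)^2 := by
    nlinarith [mul_nonneg (sq_nonneg (p-q)) (sub_nonneg.2 hsum)]
  rw [h1, h2, h3, h4]
  nlinarith [key, hp, hq]

/-- Trace distance bound: for density matrices ρ, σ,
    T(ρ,σ) = (1/2)‖ρ−σ‖₁ ≤ √(1 − Tr(ρσ)). -/
theorem trace_distance_le_sqrt_one_sub_trace
    (n : ℕ) (ρ σ : Matrix (Fin n) (Fin n) ℂ)
    (hρ : ρ.PosSemidef) (hρ1 : ρ.trace = 1)
    (hσ : σ.PosSemidef) (hσ1 : σ.trace = 1)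
    (h : (ρ - σ).IsHermitian) :
    (1 / 2) * ∑ i, |h.eigenvalues i| ≤ Real.sqrt (1 - ((ρ * σ).trace).re) := by
  classical
  set U : Matrix (Fin n) (Fin n) ℂ := ↑(Matrix.IsHermitian.eigenvectorUnitary h) with hUdef
  have hU1 : star U * U = 1 :=
    Unitary.star_mul_self_of_mem (Matrix.IsHermitian.eigenvectorUnitary h).2
  have hU2 : U * star U = 1 :=
    Unitary.mul_star_self_of_mem (Matrix.IsHermitian.eigenvectorUnitary h).2
  set ρ' := star U * ρ * U with hρ'def
  set σ' := star U * σ * U with hσ'def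
  have hρ'psd : ρ'.PosSemidef := by
    rw [hρ'def, Matrix.star_eq_conjTranspose]
    exact hρ.conjTranspose_mul_mul_same U
  have hσ'psd : σ'.PosSemidef := by
    rw [hσ'def, Matrix.star_eq_conjTranspose]
    exact hσ.conjTranspose_mul_mul_same U
  set lam := h.eigenvalues with hlamdef
  have hdiag : ρ' - σ' = Matrix.diagonal (RCLike.ofReal ∘ lam) := by
    rw [hρ'def, hσ'def, ← Matrix.IsHermitian.conjStarAlgAut_star_eigenvectorUnitary h,
      Unitary.conjStarAlgAut_star_apply]
    simp [Matrix.mul_sub, Matrix.sub_mul, hUdef]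
  have htr' : ∀ A : Matrix (Fin n) (Fin n) ℂ, (star U * A * U).trace = A.trace := by
    intro A
    rw [Matrix.trace_mul_cycle, hU2, Matrix.one_mul]
  have hρ'tr : ρ'.trace = 1 := by rw [hρ'def, htr' ρ, hρ1]
  have hσ'tr : σ'.trace = 1 := by rw [hσ'def, htr' σ, hσ1]
  have htrρσ : (ρ' * σ').trace = (ρ * σ).trace := by
    have heq : ρ' * σ' = star U * (ρ * σ) * U := by
      rw [hρ'def, hσ'def]
      calc (star U * ρ * U) * (star U * σ * U)
          = star U * (ρ * ((U * star U) * (σ * U))) := by simp only [Matrix.mul_assoc]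
        _ = star U * (ρ * σ) * U := by rw [hU2, Matrix.one_mul]; simp only [Matrix.mul_assoc]
    rw [heq, htr']
  have hde : ∀ i, (ρ' i i).re - (σ' i i).re = lam i := by
    intro i
    have h1 : (ρ' - σ') i i = RCLike.ofReal (lam i) := by
      rw [hdiag]; simp [Matrix.diagonal_apply_eq]
    have h2 := congrArg Complex.re h1
    simpa [Matrix.sub_apply] using h2
  have hd0 : ∀ i, 0 ≤ (ρ' i i).re := fun i => (psd_diag_nonneg hρ'psd i).1
  have he0 : ∀ i, 0 ≤ (σ' i i).re := fun i => (psd_diag_nonneg hσ'psd i).1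
  have hdsum : ∑ i, (ρ' i i).re = 1 := by
    have h1 : (ρ'.trace).re = 1 := by rw [hρ'tr]; simp
    rw [Matrix.trace, Complex.re_sum] at h1
    simpa [Matrix.diag] using h1
  have hesum : ∑ i, (σ' i i).re = 1 := by
    have h1 : (σ'.trace).re = 1 := by rw [hσ'tr]; simp
    rw [Matrix.trace, Complex.re_sum] at h1
    simpa [Matrix.diag] using h1
  set P := Finset.univ.filter (fun i => 0 ≤ lam i) with hPdef
  set Q := Finset.univ.filter (fun i => ¬ 0 ≤ lam i) with hQdef
  have hsplit : ∀ f : Fin n → ℝ, ∑ i, f i = ∑ i ∈ P, f i + ∑ i ∈ Q, f i := fun f =>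
    (Finset.sum_filter_add_sum_filter_not Finset.univ _ f).symm
  set a := ∑ i ∈ P, (ρ' i i).re with hadef
  set b := ∑ i ∈ P, (σ' i i).re with hbdef
  have hab : a - b = ∑ i ∈ P, lam i := by
    rw [hadef, hbdef, ← Finset.sum_sub_distrib]
    exact Finset.sum_congr rfl fun i _ => hde i
  have hS0 : 0 ≤ ∑ i ∈ P, lam i :=
    Finset.sum_nonneg fun i hi => (Finset.mem_filter.mp hi).2
  have hlamsum : ∑ i, lam i = 0 := by
    have h1 : ∑ i, ((ρ' i i).re - (σ' i i).re) = 0 := by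
      rw [Finset.sum_sub_distrib, hdsum, hesum]; ring
    rw [← h1]
    exact Finset.sum_congr rfl fun i _ => (hde i).symm
  have habs : ∑ i, |lam i| = 2 * ∑ i ∈ P, lam i := by
    have h1 : ∑ i ∈ P, lam i + ∑ i ∈ Q, lam i = 0 := by rw [← hsplit]; exact hlamsum
    rw [hsplit (fun i => |lam i|)]
    have h2 : ∑ i ∈ P, |lam i| = ∑ i ∈ P, lam i :=
      Finset.sum_congr rfl fun i hi => abs_of_nonneg (Finset.mem_filter.mp hi).2
    have h3 : ∑ i ∈ Q, |lam i| = - ∑ i ∈ Q, lam i := by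
      rw [← Finset.sum_neg_distrib]
      exact Finset.sum_congr rfl fun i hi =>
        abs_of_neg (lt_of_not_ge (Finset.mem_filter.mp hi).2)
    rw [h2, h3]; linarith
  have ha0 : 0 ≤ a := Finset.sum_nonneg fun i _ => hd0 i
  have hb0 : 0 ≤ b := Finset.sum_nonneg fun i _ => he0 i
  have hdQ : ∑ i ∈ Q, (ρ' i i).re = 1 - a := by
    have := hsplit (fun i => (ρ' i i).re); rw [hdsum] at this; linarith
  have heQ : ∑ i ∈ Q, (σ' i i).re = 1 - b := by
    have := hsplit (fun i => (σ' i i).re); rw [hesum] at this; linarith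
  have ha1 : a ≤ 1 := by
    have : 0 ≤ ∑ i ∈ Q, (ρ' i i).re := Finset.sum_nonneg fun i _ => hd0 i
    rw [hdQ] at this; linarith
  have hb1 : b ≤ 1 := by
    have : 0 ≤ ∑ i ∈ Q, (σ' i i).re := Finset.sum_nonneg fun i _ => he0 i
    rw [heQ] at this; linarith
  -- trace bound
  have hmain : ((ρ * σ).trace).re ≤
      ∑ i, ∑ j, ‖ρ' i j‖ * ‖σ' i j‖ := by
    rw [← htrρσ, Matrix.trace, Complex.re_sum]
    refine Finset.sum_le_sum fun i _ => ?_
    rw [Matrix.diag_apply, Matrix.mul_apply, Complex.re_sum]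
    refine Finset.sum_le_sum fun j _ => ?_
    refine (Complex.re_le_norm _).trans ?_
    rw [norm_mul]
    have : ‖σ' j i‖ = ‖σ' i j‖ := by
      rw [← hσ'psd.isHermitian.apply i j, Complex.star_def, Complex.norm_conj]
    rw [this]
  have hblocks : ∑ i, ∑ j, ‖ρ' i j‖ * ‖σ' i j‖ ≤
      Real.sqrt ((a*a)*(b*b)) + Real.sqrt ((a*(1-a))*(b*(1-b)))
        + Real.sqrt (((1-a)*a)*((1-b)*b))
        + Real.sqrt (((1-a)*(1-a))*((1-b)*(1-b))) := by
    rw [hsplit (fun i => ∑ j, ‖ρ' i j‖ * ‖σ' i j‖)]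
    have hin : ∀ i, ∑ j, ‖ρ' i j‖ * ‖σ' i j‖
        = ∑ j ∈ P, ‖ρ' i j‖ * ‖σ' i j‖
          + ∑ j ∈ Q, ‖ρ' i j‖ * ‖σ' i j‖ := fun i =>
      hsplit _
    simp_rw [hin, Finset.sum_add_distrib]
    have t1 := block_bound hρ'psd hσ'psd P P
    have t2 := block_bound hρ'psd hσ'psd P Q
    have t3 := block_bound hρ'psd hσ'psd Q P
    have t4 := block_bound hρ'psd hσ'psd Q Q
    rw [hdQ, heQ] at t2 t3 t4
    rw [← hadef, ← hbdef] at t1 t2 t3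
    linarith
  have hsc := scalar_ineq a b ha0 ha1 hb0 hb1
  have hfin : ((ρ * σ).trace).re ≤ 1 - (a-b)^2 := by
    linarith [hmain, hblocks, hsc]
  rw [habs]
  have hgoal : (1/2 : ℝ) * (2 * ∑ i ∈ P, lam i) = a - b := by rw [hab]; ring
  rw [hgoal]
  have hS2 : (a-b)^2 ≤ 1 - ((ρ * σ).trace).re := by linarith
  calc a - b = Real.sqrt ((a-b)^2) := by
        rw [Real.sqrt_sq (by rw [hab]; exact hS0)]
    _ ≤ Real.sqrt (1 - ((ρ * σ).trace).re) := Real.sqrt_le_sqrt hS2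
end

section
/- Let u: [0,1] → ℝ be given for x ∈ [0,c) (some c > 0) by u(x) = (2 − 2x)/(4 − 5x). Then there exist no N ∈ ℕ and Hermitian matrices A, B ∈ ℂ^{N×N} such that u(x) equals the largest eigenvalue of xA + B for all x ∈ [0, c). -/
open Polynomial Matrix

lemma charpoly_eval_eq_zero_of_mem_spectrum {N : ℕ} {M : Matrix (Fin N) (Fin N) ℂ} {μ : ℂ}
    (h : μ ∈ spectrum ℂ M) : M.charpoly.eval μ = 0 := by
  have heq : (charmatrix M).map (evalRingHom μ) = algebraMap ℂ _ μ - M := by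
    ext i j
    by_cases hij : i = j <;>
      simp [hij, charmatrix_apply, Matrix.map_apply, Matrix.algebraMap_matrix_apply,
        Matrix.sub_apply, Matrix.diagonal_apply]
  have hdet : M.charpoly.eval μ = (algebraMap ℂ _ μ - M).det := by
    rw [Matrix.charpoly, ← heq, ← RingHom.mapMatrix_apply, ← RingHom.map_det, coe_evalRingHom]
  by_contra hne
  rw [hdet] at hne
  exact (spectrum.mem_iff.mp h) ((Matrix.isUnit_iff_isUnit_det _).mpr (isUnit_iff_ne_zero.mpr hne))

/-- The non-linear rational function u(x) = (2−2x)/(4−5x) cannot be the largest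
    eigenvalue of xA + B for Hermitian matrices A, B, on any interval [0, c). -/
theorem no_hermitian_pencil_realizes_rational
    (c : ℝ) (hc : 0 < c) :
    ¬ ∃ (N : ℕ) (A B : Matrix (Fin N) (Fin N) ℂ),
        A.IsHermitian ∧ B.IsHermitian ∧
        ∀ x : ℝ, x ∈ Set.Ico 0 c →
          ∀ hH : ((x : ℂ) • A + B).IsHermitian,
            IsGreatest (Set.range hH.eigenvalues) ((2 - 2 * x) / (4 - 5 * x)) := by
  rintro ⟨N, A, B, hA, hB, hmax⟩
  set P : Polynomial (Polynomial ℂ) :=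
    ((X : Polynomial ℂ) • A.map Polynomial.C + B.map Polynomial.C).charpoly with hP
  have hPdeg : P.natDegree = N := by
    rw [hP, charpoly_natDegree_eq_dim, Fintype.card_fin]
  have hPmonic : P.Monic := charpoly_monic _
  set G : Polynomial ℂ :=
    ∑ i ∈ Finset.range (N+1), P.coeff i * (2 - 2*X)^i * (4 - 5*X)^(N - i) with hG
  set m : ℝ := min c (4/5) with hm
  have hm0 : (0:ℝ) < m := lt_min hc (by norm_num)
  have hroot : ∀ x : ℝ, x ∈ Set.Ioo (0:ℝ) m → G.eval (x:ℂ) = 0 := by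
    intro x hx
    have hxc : x < c := lt_of_lt_of_le hx.2 (min_le_left _ _)
    have hx45 : x < 4/5 := lt_of_lt_of_le hx.2 (min_le_right _ _)
    have hden : (4 : ℝ) - 5*x ≠ 0 := by nlinarith
    have hdenC : (4 : ℂ) - 5*(x:ℂ) ≠ 0 := by
      exact_mod_cast fun h => hden (by exact_mod_cast h)
    have hH : ((x:ℂ) • A + B).IsHermitian := by
      apply Matrix.IsHermitian.add _ hB
      unfold Matrix.IsHermitian
      rw [Matrix.conjTranspose_smul, hA]
      norm_num
    obtain ⟨i, hi⟩ := (hmax x ⟨le_of_lt hx.1, hxc⟩ hH).1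
    set u : ℝ := (2 - 2*x)/(4 - 5*x) with hu
    have hspec : (u:ℂ) ∈ spectrum ℂ ((x:ℂ) • A + B) := by
      have := hH.eigenvalues_mem_spectrum_real i
      rw [hi] at this
      exact spectrum.algebraMap_mem ℂ this
    have h0 : ((x:ℂ) • A + B).charpoly.eval (u:ℂ) = 0 :=
      charpoly_eval_eq_zero_of_mem_spectrum hspec
    have hmap : (((X : Polynomial ℂ) • A.map Polynomial.C + B.map Polynomial.C).map (evalRingHom (x:ℂ)))
        = (x:ℂ) • A + B := by
      ext i j
      simp [Matrix.map_apply, Matrix.add_apply, Matrix.smul_apply, smul_eq_mul]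
      ring
    have hcp : ((x:ℂ) • A + B).charpoly = P.map (evalRingHom (x:ℂ)) := by
      rw [← hmap, charpoly_map]
    rw [hcp, eval_map, eval₂_eq_sum_range' (evalRingHom (x:ℂ))
      (by rw [hPdeg]; exact Nat.lt_succ_self N) (u:ℂ)] at h0
    -- key algebraic identity
    have hid : (2 - 2*(x:ℂ)) = (u:ℂ) * (4 - 5*(x:ℂ)) := by
      rw [hu]
      push_cast
      field_simp
      rw [mul_div_assoc, div_self (by rwa [mul_comm] at hdenC), mul_one]
    have : G.eval (x:ℂ)
        = (4 - 5*(x:ℂ))^N * ∑ i ∈ Finset.range (N+1),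
            (evalRingHom (x:ℂ)) (P.coeff i) * (u:ℂ)^i := by
      rw [hG, eval_finset_sum, Finset.mul_sum]
      apply Finset.sum_congr rfl
      intro i hi'
      have hiN : i ≤ N := Nat.lt_succ_iff.mp (Finset.mem_range.mp hi')
      simp only [eval_mul, eval_pow, eval_sub, eval_ofNat, eval_mul, eval_X]
      rw [hid, mul_pow]
      rw [show ((4:ℂ) - 5*(x:ℂ))^N = (4 - 5*(x:ℂ))^(N-i) * (4 - 5*(x:ℂ))^i by
        rw [← pow_add, Nat.sub_add_cancel hiN]]
      simp [coe_evalRingHom]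
      ring
    rw [this, h0, mul_zero]
  have hGzero : G = 0 := by
    apply Polynomial.eq_zero_of_infinite_isRoot
    apply Set.Infinite.mono (s := (fun t : ℝ => (t:ℂ)) '' Set.Ioo 0 m)
    · rintro z ⟨t, ht, rfl⟩
      exact hroot t ht
    · exact Set.Infinite.image (Set.injOn_of_injective Complex.ofReal_injective)
        (Set.Ioo_infinite hm0)
  have hGval : G.eval ((4:ℂ)/5) = (2/5)^N := by
    rw [hG, eval_finset_sum, Finset.sum_range_succ]
    have hrest : ∑ i ∈ Finset.range N,
        (P.coeff i * (2 - 2*X)^i * (4 - 5*X)^(N - i)).eval ((4:ℂ)/5) = 0 := by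
      apply Finset.sum_eq_zero
      intro i hi'
      have : i < N := Finset.mem_range.mp hi'
      simp only [eval_mul, eval_pow, eval_sub, eval_ofNat, eval_X]
      rw [show ((4:ℂ) - 5*(4/5)) = 0 by norm_num, zero_pow (by omega)]
      ring
    rw [hrest, zero_add]
    have hcN : P.coeff N = 1 := by
      have := hPmonic.leadingCoeff
      rwa [Polynomial.leadingCoeff, hPdeg] at this
    rw [hcN]
    norm_num
  rw [hGzero] at hGval
  simp at hGval
  have : ((2:ℂ)/5)^N ≠ 0 := pow_ne_zero _ (by norm_num)
  exact this hGval.symm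
end

section
/- For x, y ∈ ℝ, the largest eigenvalue of xI + diag(y, y/2) − [[79/24, √21/8],[√21/8, 19/24]] equals x − 49/24 + (1/4)(3y + √(121/4 − 10y + y²)). -/
/-- The largest eigenvalue of xI + diag(y, y/2) − [[79/24, √21/8],[√21/8, 19/24]]
    equals x − 49/24 + (1/4)(3y + √(121/4 − 10y + y²)). -/
theorem buyer_utility_eigenvalue
    (x y : ℝ)
    (hH : (x • (1 : Matrix (Fin 2) (Fin 2) ℝ) +
            Matrix.diagonal ![y, y/2] -
            !![79/24, Real.sqrt 21 / 8; Real.sqrt 21 / 8, 19/24]).IsHermitian) :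
    IsGreatest (Set.range hH.eigenvalues)
      (x - 49/24 + (1/4) * (3 * y + Real.sqrt (121/4 - 10 * y + y^2))) := by
  set a : ℝ := x + y - 79/24 with ha
  set c : ℝ := x + y/2 - 19/24 with hc
  set b : ℝ := Real.sqrt 21 / 8 with hb
  set D : ℝ := 121/4 - 10 * y + y^2 with hD
  have hDnn : 0 ≤ D := by rw [hD]; nlinarith [sq_nonneg (y - 5)]
  have hsD : Real.sqrt D ^ 2 = 121/4 - 10 * y + y^2 := by
    rw [Real.sq_sqrt hDnn, hD]
  have hsDnn : 0 ≤ Real.sqrt D := Real.sqrt_nonneg _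
  have hb2 : b * b = 21 / 64 := by
    rw [hb, div_mul_div_comm, Real.mul_self_sqrt (by norm_num)]; norm_num
  set μ : ℝ := x - 49/24 + (1/4) * (3 * y + Real.sqrt D) with hμ
  set μ' : ℝ := x - 49/24 + (1/4) * (3 * y - Real.sqrt D) with hμ'
  have hA : (x • (1 : Matrix (Fin 2) (Fin 2) ℝ) + Matrix.diagonal ![y, y/2] -
      !![79/24, Real.sqrt 21 / 8; Real.sqrt 21 / 8, 19/24]) = !![a, -b; -b, c] := by
    ext i j
    fin_cases i <;> fin_cases j <;>
      simp [Matrix.one_apply, Matrix.diagonal_apply, ha, hb, hc] <;> ring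
  have hmem : ∀ r : ℝ, r ∈ spectrum ℝ (x • (1 : Matrix (Fin 2) (Fin 2) ℝ) +
      Matrix.diagonal ![y, y/2] -
      !![79/24, Real.sqrt 21 / 8; Real.sqrt 21 / 8, 19/24]) ↔
      (r - a) * (r - c) - b * b = 0 := by
    intro r
    rw [spectrum.mem_iff, Matrix.isUnit_iff_isUnit_det, isUnit_iff_ne_zero, not_not, hA]
    have : (algebraMap ℝ (Matrix (Fin 2) (Fin 2) ℝ)) r - !![a,-b;-b,c] = !![r-a,b;b,r-c] := by
      ext i j
      fin_cases i <;> fin_cases j <;> simp [Matrix.algebraMap_matrix_apply]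
    rw [this, Matrix.det_fin_two_of]
    try (constructor <;> intro h <;> linarith)
  have hrange := Matrix.IsHermitian.spectrum_real_eq_range_eigenvalues (A := x • (1 : Matrix (Fin 2) (Fin 2) ℝ) +
      Matrix.diagonal ![y, y/2] - !![79/24, Real.sqrt 21 / 8; Real.sqrt 21 / 8, 19/24]) hH
  constructor
  · rw [← hrange]
    rw [hmem μ, hb2, hμ, ha, hc]
    linear_combination (1/16) * hsD
  · rintro r ⟨i, rfl⟩
    have hr : hH.eigenvalues i ∈ spectrum ℝ (x • (1 : Matrix (Fin 2) (Fin 2) ℝ) +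
        Matrix.diagonal ![y, y/2] -
        !![79/24, Real.sqrt 21 / 8; Real.sqrt 21 / 8, 19/24]) := by
      rw [hrange]; exact ⟨i, rfl⟩
    rw [hmem] at hr
    rw [ha, hc, hb2] at hr
    set r := hH.eigenvalues i
    have hfac : (r - μ) * (r - μ') = 0 := by
      rw [hμ, hμ']
      linear_combination hr - (1/16) * hsD
    rcases mul_eq_zero.mp hfac with h | h
    · linarith [sub_eq_zero.mp h]
    · have h2 : r = μ' := sub_eq_zero.mp h
      rw [h2, hμ', hμ]; linarith
end

section
/- Let ρ be a 4×4 positive semidefinite Hermitian matrix with partial trace over the second qubit equal to (1/2)I₂ (i.e., ρ₁₁ + ρ₂₂ = ρ₃₃ + ρ₄₄ = 1/2 where indices refer to the 2×2 blocks' diagonal reduced entries: (ρ)₁₁+(ρ)₂₂ = 1/2 and (ρ)₃₃+(ρ)₄₄ = 1/2, and off-diagonal reduced entries vanish appropriately). Let C(y) be the 4×4 matrix with diagonal (9y/16 − 9/20, 0, −6/5, −6/5), corner entries C₁₄ = C₄₁ = −3/10, and zeros elsewhere. Then max over such ρ of Tr(ρ C(y)) equals max over α ∈ [0, 1/2] of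 (9y/16 − 9/20)α + (3/5)√(α/2) − 3/5. -/
open scoped ComplexOrder

/-- The matrix C(y) with diagonal (9y/16 − 9/20, 0, −6/5, −6/5) and corner
    entries C₁₄ = C₄₁ = −3/10. -/
noncomputable def Cmat (y : ℝ) : Matrix (Fin 4) (Fin 4) ℂ :=
  !![((9*y/16 - 9/20 : ℝ) : ℂ), 0, 0, -3/10;
     0, 0, 0, 0;
     0, 0, -6/5, 0;
     -3/10, 0, 0, -6/5]

open Matrix in
set_option maxRecDepth 8000 in
/-- Construction: each value of the reduced objective is attained by an explicit state. -/
lemma epr_construct (y α : ℝ) (hα : α ∈ Set.Icc (0:ℝ) (1/2)) :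
    ((9*y/16 - 9/20) * α + (3/5) * Real.sqrt (α/2) - 3/5) ∈
      {t : ℝ | ∃ ρ : Matrix (Fin 4) (Fin 4) ℂ, ρ.PosSemidef ∧
        ρ 0 0 + ρ 1 1 = 1/2 ∧ ρ 2 2 + ρ 3 3 = 1/2 ∧
        ρ 0 2 + ρ 1 3 = 0 ∧ ρ 2 0 + ρ 3 1 = 0 ∧
        t = ((ρ * Cmat y).trace).re} := by
  obtain ⟨h0, h1⟩ := hα
  set A : Matrix (Fin 4) (Fin 1) ℂ :=
    Matrix.of (fun i _ => (![(Real.sqrt α : ℂ), 0, 0, -(Real.sqrt (1/2) : ℂ)]) i) with hA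
  set ρ : Matrix (Fin 4) (Fin 4) ℂ :=
    A * Aᴴ + Matrix.diagonal ![0, ((1/2 - α : ℝ) : ℂ), 0, 0] with hρ
  have hpsd : ρ.PosSemidef := by
    refine (posSemidef_self_mul_conjTranspose A).add (PosSemidef.diagonal ?_)
    intro i
    fin_cases i
    · simp
    · simpa using Complex.zero_le_real.mpr (by linarith : (0:ℝ) ≤ 1/2 - α)
    · simp
    · simp
  have hsa : (Real.sqrt α : ℂ) * (Real.sqrt α : ℂ) = (α:ℂ) := by
    norm_cast; exact Real.mul_self_sqrt h0
  have hsh2 : ((Real.sqrt 2 : ℝ):ℂ)⁻¹ ^ 2 = 1/2 := by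
    rw [inv_pow, show ((Real.sqrt 2 : ℝ):ℂ)^2 = 2 by norm_cast; rw [Real.sq_sqrt] <;> norm_num]
    norm_num
  have hsh2' : ((Real.sqrt 2 : ℝ):ℂ)⁻¹ * ((Real.sqrt 2 : ℝ):ℂ)⁻¹ = 1/2 := by
    rw [← sq]; exact hsh2
  have hdd : (Real.sqrt (α/2) : ℂ) = (Real.sqrt α : ℂ) / (Real.sqrt 2 : ℂ) := by
    norm_cast; rw [Real.sqrt_div h0]
  have hval : ρ = !![(α:ℂ), 0, 0, -(Real.sqrt (α/2) : ℂ);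
      0, ((1/2 - α : ℝ):ℂ), 0, 0; 0, 0, 0, 0;
      -(Real.sqrt (α/2) : ℂ), 0, 0, 1/2] := by
    ext i j
    fin_cases i <;> fin_cases j <;>
      simp [hρ, hA, Matrix.mul_apply, Matrix.diagonal, Fin.sum_univ_one,
        Matrix.vecHead, Matrix.vecTail, hsa, hsh2, hsh2', hdd] <;>
      (rw [div_eq_mul_inv]; try ring)
  refine ⟨ρ, hpsd, ?_, ?_, ?_, ?_, ?_⟩
  · rw [hval]; push_cast; norm_num [Matrix.vecHead, Matrix.vecTail]
  · rw [hval]; norm_num [Matrix.vecHead, Matrix.vecTail, Matrix.cons_val_two, Matrix.cons_val_three]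
  · rw [hval]; norm_num [Matrix.vecHead, Matrix.vecTail, Matrix.cons_val_two, Matrix.cons_val_three]
  · rw [hval]; norm_num [Matrix.vecHead, Matrix.vecTail, Matrix.cons_val_two, Matrix.cons_val_three]
  · rw [hval]
    rw [show (((!![(α:ℂ), 0, 0, -(Real.sqrt (α/2) : ℂ);
      0, ((1/2 - α : ℝ):ℂ), 0, 0; 0, 0, 0, 0;
      -(Real.sqrt (α/2) : ℂ), 0, 0, 1/2] : Matrix (Fin 4) (Fin 4) ℂ) * Cmat y).trace).re
      = (9*y/16 - 9/20) * α + (3/5) * Real.sqrt (α/2) - 3/5 from by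
        simp [Matrix.trace, Matrix.mul_apply, Fin.sum_univ_four, Cmat, Matrix.vecHead,
          Matrix.vecTail, Complex.add_re, Complex.mul_re, Complex.ofReal_re, Complex.ofReal_im]
        ring]

open Matrix in
/-- Upper bound: every achievable value is at most the 1-D objective at some α. -/
lemma epr_bound (y : ℝ) (t : ℝ)
    (ht : t ∈ {t : ℝ | ∃ ρ : Matrix (Fin 4) (Fin 4) ℂ, ρ.PosSemidef ∧
        ρ 0 0 + ρ 1 1 = 1/2 ∧ ρ 2 2 + ρ 3 3 = 1/2 ∧
        ρ 0 2 + ρ 1 3 = 0 ∧ ρ 2 0 + ρ 3 1 = 0 ∧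
        t = ((ρ * Cmat y).trace).re}) :
    ∃ α ∈ Set.Icc (0:ℝ) (1/2),
      t ≤ (9*y/16 - 9/20) * α + (3/5) * Real.sqrt (α/2) - 3/5 := by
  obtain ⟨ρ, hpsd, hc1, hc2, -, -, rfl⟩ := ht
  -- diagonal entries have nonnegative real parts
  have hdiag : ∀ i, 0 ≤ (ρ i i).re := by
    intro i
    have h := hpsd.dotProduct_mulVec_nonneg (Pi.single i 1)
    rw [Complex.le_def] at h
    simpa [dotProduct, Matrix.mulVec, Pi.single_apply, Finset.sum_ite_eq,
      Finset.sum_ite_eq'] using h.1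
  set a := (ρ 0 0).re with ha
  set r := (ρ 0 3).re with hrr
  set d := (ρ 3 3).re with hd
  have h30 : (ρ 3 0).re = r := by
    have h30c : ρ 3 0 = star (ρ 0 3) := by rw [← hpsd.1.apply 0 3, star_star]
    rw [h30c, hrr]; simp
  have hab : a + (ρ 1 1).re = 1/2 := by
    have := congrArg Complex.re hc1
    norm_num [Complex.add_re] at this
    exact this
  have hde : (ρ 2 2).re + d = 1/2 := by
    have := congrArg Complex.re hc2
    norm_num [Complex.add_re] at this
    exact this
  have ha0 : 0 ≤ a := hdiag 0
  have ha1 : a ≤ 1/2 := by have := hdiag 1; linarith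
  have hd0 : 0 ≤ d := hdiag 3
  have hd1 : d ≤ 1/2 := by have := hdiag 2; linarith
  -- the PSD quadratic form on ![(s:ℂ),0,0,1]
  have hq : ∀ s : ℝ, 0 ≤ a * (s*s) + (2*r) * s + d := by
    intro s
    have h := hpsd.dotProduct_mulVec_nonneg ![(s:ℂ), 0, 0, 1]
    simp [dotProduct, Matrix.mulVec, Fin.sum_univ_four, Matrix.vecHead,
      Matrix.vecTail] at h
    rw [Complex.le_def] at h
    simp [Complex.add_re, Complex.mul_re] at h
    simp only [← ha, ← hrr, ← hd] at h
    have h1 := h.1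
    rw [h30] at h1
    nlinarith [h1]
  have hdisc := discrim_le_zero hq
  rw [discrim] at hdisc
  have hr2 : r^2 ≤ a/2 := by nlinarith
  have hmr : -r ≤ Real.sqrt (a/2) := by
    calc -r ≤ |r| := neg_le_abs r
    _ = Real.sqrt (r^2) := (Real.sqrt_sq_eq_abs r).symm
    _ ≤ Real.sqrt (a/2) := Real.sqrt_le_sqrt hr2
  have htr : ((ρ * Cmat y).trace).re = (9*y/16 - 9/20) * a
      - (3/10) * (r + (ρ 3 0).re) - (6/5) * ((ρ 2 2).re + d) := by
    simp [Matrix.trace, Matrix.mul_apply, Fin.sum_univ_four, Cmat, Matrix.vecHead,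
      Matrix.vecTail, Complex.add_re, Complex.mul_re]
    norm_num
    ring
  refine ⟨a, ⟨ha0, ha1⟩, ?_⟩
  rw [htr, h30, hde]
  nlinarith [hmr]

/-- The buyer's optimization over two-qubit states ρ ⪰ 0 with Tr₂(ρ) = I/2
    reduces to a one-dimensional maximization over α ∈ [0, 1/2]. -/
theorem epr_strategy_optimization (y : ℝ) :
    sSup {t : ℝ | ∃ ρ : Matrix (Fin 4) (Fin 4) ℂ, ρ.PosSemidef ∧
        ρ 0 0 + ρ 1 1 = 1/2 ∧ ρ 2 2 + ρ 3 3 = 1/2 ∧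
        ρ 0 2 + ρ 1 3 = 0 ∧ ρ 2 0 + ρ 3 1 = 0 ∧
        t = ((ρ * Cmat y).trace).re} =
    sSup {t : ℝ | ∃ α ∈ Set.Icc (0 : ℝ) (1/2),
        t = (9*y/16 - 9/20) * α + (3/5) * Real.sqrt (α/2) - 3/5} := by
  set S₁ := {t : ℝ | ∃ ρ : Matrix (Fin 4) (Fin 4) ℂ, ρ.PosSemidef ∧
        ρ 0 0 + ρ 1 1 = 1/2 ∧ ρ 2 2 + ρ 3 3 = 1/2 ∧
        ρ 0 2 + ρ 1 3 = 0 ∧ ρ 2 0 + ρ 3 1 = 0 ∧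
        t = ((ρ * Cmat y).trace).re} with hS₁
  set S₂ := {t : ℝ | ∃ α ∈ Set.Icc (0 : ℝ) (1/2),
        t = (9*y/16 - 9/20) * α + (3/5) * Real.sqrt (α/2) - 3/5} with hS₂
  have hsub : S₂ ⊆ S₁ := by
    rintro t ⟨α, hα, rfl⟩
    exact epr_construct y α hα
  have hS₂ne : S₂.Nonempty :=
    ⟨(9*y/16 - 9/20) * 0 + (3/5) * Real.sqrt (0/2) - 3/5, 0, by norm_num, rfl⟩
  have hS₂bdd : BddAbove S₂ := by
    refine ⟨|9*y/16 - 9/20| + 1, ?_⟩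
    rintro t ⟨α, ⟨h0, h1⟩, rfl⟩
    have hs : Real.sqrt (α/2) ≤ 1/2 := by
      have h := Real.sqrt_le_sqrt (show α/2 ≤ 1/4 by linarith)
      rwa [show (1/4:ℝ) = (1/2)^2 by norm_num, Real.sqrt_sq (by norm_num : (0:ℝ) ≤ 1/2)] at h
    have hc1 := le_abs_self (9*y/16 - 9/20)
    have hc2 := neg_abs_le (9*y/16 - 9/20)
    nlinarith
  have hle : ∀ t ∈ S₁, t ≤ sSup S₂ := by
    intro t ht
    obtain ⟨α, hα, htle⟩ := epr_bound y t ht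
    exact htle.trans (le_csSup hS₂bdd ⟨α, hα, rfl⟩)
  have hS₁ne : S₁.Nonempty := ⟨_, hsub hS₂ne.choose_spec⟩
  refine le_antisymm (csSup_le hS₁ne hle) (csSup_le_csSup ⟨sSup S₂, hle⟩ hS₂ne hsub)
end

section
/- There is no non-zero bivariate real polynomial P(x, y) such that P(x, W(e^{1−x}(2 − x))) = 0 for all x in some interval [0, r), r > 0. Consequently, the function v(x) = W(e^{1−x}(2−x)) is not semialgebraic on any interval [0, r). -/
/-- A basic semialgebraic subset of ℝⁿ: the solution set of one polynomial
    equality and finitely many strict polynomial inequalities. -/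
def IsBasicSemialgebraic {n : ℕ} (s : Set (Fin n → ℝ)) : Prop :=
  ∃ (p : MvPolynomial (Fin n) ℝ) (m : ℕ) (g : Fin m → MvPolynomial (Fin n) ℝ),
    s = {x | MvPolynomial.eval x p = 0 ∧ ∀ i, 0 < MvPolynomial.eval x (g i)}

/-- A semialgebraic set: a finite union of basic semialgebraic sets. -/
def IsSemialgebraic {n : ℕ} (s : Set (Fin n → ℝ)) : Prop :=
  ∃ (k : ℕ) (t : Fin k → Set (Fin n → ℝ)),
    (∀ i, IsBasicSemialgebraic (t i)) ∧ s = ⋃ i, t i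

open Polynomial Filter Topology Set

namespace LambertAux


/-- exp(2-x)*(x-2)*|p(x)| → 0 at ∞ -/
lemma tendsto_aux (p : ℝ[X]) :
    Tendsto (fun x : ℝ => Real.exp (2 - x) * (x - 2) * |Polynomial.eval x p|) atTop (𝓝 0) := by
  have h := ((X - C (2:ℝ)) * p).tendsto_div_exp_atTop
  have h2 : Tendsto (fun x : ℝ => |Real.exp 2 * (Polynomial.eval x ((X - C (2:ℝ)) * p) / Real.exp x)|)
      atTop (𝓝 0) := by
    have := (h.const_mul (Real.exp 2)).abs
    simpa using this
  refine h2.congr' ?_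
  filter_upwards [eventually_ge_atTop (2:ℝ)] with x hx
  have hx2 : (0:ℝ) ≤ x - 2 := by linarith
  rw [abs_mul, abs_div, abs_of_pos (Real.exp_pos 2), abs_of_pos (Real.exp_pos x)]
  rw [Polynomial.eval_mul]
  rw [abs_mul]
  rw [Polynomial.eval_sub, Polynomial.eval_X, Polynomial.eval_C, abs_of_nonneg hx2]
  rw [Real.exp_sub]
  ring

/-- a real polynomial whose values tend to 0 at ∞ is zero -/
lemma poly_zero_of_tendsto (p : ℝ[X]) (h : Tendsto (fun x => Polynomial.eval x p) atTop (𝓝 0)) :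
    p = 0 := by
  by_contra hp
  rcases lt_or_ge 0 p.degree with hd | hd
  · have h1 := Polynomial.abs_tendsto_atTop p hd
    exact not_tendsto_nhds_of_tendsto_atTop h1 0 (by simpa using h.abs)
  · have hc := Polynomial.eq_C_of_natDegree_le_zero (Polynomial.natDegree_le_iff_degree_le.2 hd)
    rw [hc] at h hp
    have : p.coeff 0 = 0 := by simpa using h
    exact hp (by rw [this, map_zero])

/-- eval bound: |eval y (Q.map φ)| ≤ sum of |eval of coeffs| when |y| ≤ 1 -/
lemma eval_map_bound (Q : Polynomial (Polynomial ℝ)) (x y : ℝ) (hy : |y| ≤ 1) :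
    |Polynomial.eval y (Q.map (Polynomial.evalRingHom x))| ≤
      ∑ j ∈ Finset.range (Q.natDegree + 1), |Polynomial.eval x (Q.coeff j)| := by
  have hdeg : (Q.map (Polynomial.evalRingHom x)).natDegree < Q.natDegree + 1 :=
    lt_of_le_of_lt Polynomial.natDegree_map_le (Nat.lt_succ_self _)
  rw [Polynomial.eval_eq_sum_range' hdeg]
  refine le_trans (Finset.abs_sum_le_sum_abs _ _) ?_
  refine Finset.sum_le_sum fun j _ => ?_
  rw [Polynomial.coeff_map, Polynomial.coe_evalRingHom, abs_mul]
  calc |Polynomial.eval x (Q.coeff j)| * |y ^ j|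
      ≤ |Polynomial.eval x (Q.coeff j)| * 1 := by
        refine mul_le_mul_of_nonneg_left ?_ (abs_nonneg _)
        rw [abs_pow]; exact pow_le_one₀ (abs_nonneg _) hy
    _ = _ := mul_one _

/-- Key induction: if Σ q_j(x) v(x)^j = 0 for all x ≥ 3, then Q = 0. -/
lemma key (v : ℝ → ℝ)
    (hb : ∀ x : ℝ, 3 ≤ x → v x < 0 ∧ -1 ≤ v x ∧ -v x ≤ Real.exp (2 - x) * (x - 2)) :
    ∀ (n : ℕ) (Q : Polynomial (Polynomial ℝ)), Q.natDegree ≤ n →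
      (∀ x : ℝ, 3 ≤ x → Polynomial.eval (v x) (Q.map (Polynomial.evalRingHom x)) = 0) →
      Q = 0 := by
  intro n
  induction n with
  | zero =>
    intro Q hQd hQ
    rw [Polynomial.eq_C_of_natDegree_le_zero hQd]
    have hc : Q.coeff 0 = 0 := by
      apply poly_zero_of_tendsto
      refine Tendsto.congr' ?_ tendsto_const_nhds
      filter_upwards [eventually_ge_atTop (3:ℝ)] with x hx
      have := hQ x hx
      rw [Polynomial.eq_C_of_natDegree_le_zero hQd, Polynomial.map_C, Polynomial.eval_C,
        Polynomial.coe_evalRingHom] at this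
      exact this.symm
    rw [hc, map_zero]
  | succ n ih =>
    intro Q hQd hQ
    set Q1 := Q.divX with hQ1
    set q0 := Q.coeff 0 with hq0
    have hsplit : ∀ x : ℝ, Polynomial.eval (v x) (Q.map (Polynomial.evalRingHom x)) =
        v x * Polynomial.eval (v x) (Q1.map (Polynomial.evalRingHom x))
          + Polynomial.eval x q0 := by
      intro x
      conv_lhs => rw [← Q.divX_mul_X_add]
      rw [Polynomial.map_add, Polynomial.map_mul, Polynomial.map_X, Polynomial.map_C,
        Polynomial.eval_add, Polynomial.eval_mul, Polynomial.eval_X, Polynomial.eval_C,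
        Polynomial.coe_evalRingHom]
      ring
    -- q0 = 0
    have hq0z : q0 = 0 := by
      apply poly_zero_of_tendsto
      have hbnd : Tendsto (fun x : ℝ => ∑ j ∈ Finset.range (Q1.natDegree + 1),
          Real.exp (2 - x) * (x - 2) * |Polynomial.eval x (Q1.coeff j)|) atTop (𝓝 0) := by
        rw [show (0:ℝ) = ∑ _j ∈ Finset.range (Q1.natDegree + 1), (0:ℝ) by simp]
        exact tendsto_finset_sum _ fun j _ => tendsto_aux (Q1.coeff j)
      refine squeeze_zero_norm' ?_ hbnd
      filter_upwards [eventually_ge_atTop (3:ℝ)] with x hx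
      obtain ⟨hv1, hv2, hv3⟩ := hb x hx
      have hvabs : |v x| ≤ 1 := by rw [abs_le]; constructor <;> linarith
      have h0 := hQ x hx
      rw [hsplit x] at h0
      have : Polynomial.eval x q0 = -(v x * Polynomial.eval (v x)
          (Q1.map (Polynomial.evalRingHom x))) := by linarith
      rw [Real.norm_eq_abs, this, abs_neg, abs_mul]
      rw [← Finset.mul_sum]
      have hvb : |v x| ≤ Real.exp (2 - x) * (x - 2) := by
        rw [abs_of_neg hv1]; exact hv3
      refine mul_le_mul hvb (eval_map_bound Q1 x (v x) hvabs) (abs_nonneg _) ?_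
      have : (0:ℝ) < Real.exp (2 - x) := Real.exp_pos _
      nlinarith
    -- Q1 = 0
    have hQ1z : Q1 = 0 := by
      refine ih Q1 ?_ ?_
      · rw [Polynomial.natDegree_le_iff_coeff_eq_zero]
        intro m hm
        rw [Polynomial.coeff_divX]
        refine Polynomial.coeff_eq_zero_of_natDegree_lt (lt_of_le_of_lt hQd ?_)
        omega
      · intro x hx
        have h0 := hQ x hx
        rw [hsplit x, hq0z, Polynomial.eval_zero, add_zero] at h0
        exact (mul_eq_zero.1 h0).resolve_left (ne_of_lt (hb x hx).1)
    have := Q.divX_mul_X_add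
    rw [← hQ1, ← hq0, hQ1z, hq0z] at this
    simp at this
    exact this.symm



/-- lower bound for g x = exp(1-x)(2-x) -/
lemma g_lb (x : ℝ) : -Real.exp (-2) ≤ Real.exp (1 - x) * (2 - x) := by
  have h1 : Real.exp (1 - x) * Real.exp (x - 3) = Real.exp (-2) := by
    rw [← Real.exp_add]; ring_nf
  have h2 : x - 2 ≤ Real.exp (x - 3) := by
    have := Real.add_one_le_exp (x - 3); linarith
  nlinarith [Real.exp_pos (1 - x)]

lemma g_gt (x : ℝ) : -Real.exp (-1) < Real.exp (1 - x) * (2 - x) := by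
  have := g_lb x
  have h2 : Real.exp (-2) < Real.exp (-1) := Real.exp_lt_exp.2 (by norm_num)
  linarith

/-- f(w) = w e^w is strictly monotone on [-1, ∞). -/
lemma f_strictMonoOn : StrictMonoOn (fun w : ℝ => w * Real.exp w) (Set.Ici (-1)) := by
  have hd : ∀ w : ℝ, HasDerivAt (fun w : ℝ => w * Real.exp w) ((1 + w) * Real.exp w) w := by
    intro w
    have := (hasDerivAt_id w).fun_mul (Real.hasDerivAt_exp w)
    rw [show (1 + w) * Real.exp w = 1 * Real.exp w + id w * Real.exp w by simp only [id_eq]; ring]; exact this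
  refine strictMonoOn_of_deriv_pos (convex_Ici _) ?_ ?_
  · exact (continuous_id.mul Real.continuous_exp).continuousOn
  · intro w hw
    rw [interior_Ici, Set.mem_Ioi] at hw
    rw [(hd w).deriv]
    have : (0:ℝ) < 1 + w := by linarith
    positivity

/-- W is analytic at every z₀ > -e⁻¹. -/
lemma analyticAt_W (W : ℝ → ℝ)
    (hW : ∀ z : ℝ, -Real.exp (-1) ≤ z → W z * Real.exp (W z) = z ∧ -1 ≤ W z)
    {z₀ : ℝ} (hz : -Real.exp (-1) < z₀) : AnalyticAt ℝ W z₀ := by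
  set f : ℝ → ℝ := fun w => w * Real.exp w with hf
  obtain ⟨h₁, h₂⟩ := hW z₀ hz.le
  set w₀ := W z₀ with hw₀
  have h₃ : -1 < w₀ := by
    rcases eq_or_lt_of_le h₂ with h | h
    · exfalso
      rw [← h] at h₁
      rw [show ((-1:ℝ)) * Real.exp (-1) = -Real.exp (-1) by ring] at h₁
      exact absurd h₁.symm (ne_of_gt hz)
    · exact h
  set c : ℝ := (1 + w₀) * Real.exp w₀ with hc
  have hcne : c ≠ 0 := by
    have : (0:ℝ) < 1 + w₀ := by linarith
    positivity
  have hs : HasStrictDerivAt f c w₀ := by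
    have := (hasStrictDerivAt_id w₀).fun_mul (Real.hasStrictDerivAt_exp w₀)
    rw [hc, show (1 + w₀) * Real.exp w₀ = 1 * Real.exp w₀ + id w₀ * Real.exp w₀ by simp only [id_eq]; ring]; exact this
  have hF := hs.hasStrictFDerivAt_equiv hcne
  set Φ := hF.toOpenPartialHomeomorph f with hΦ
  have hΦcoe : (Φ : ℝ → ℝ) = f := hF.toOpenPartialHomeomorph_coe
  have hmem : w₀ ∈ Φ.source := hF.mem_toOpenPartialHomeomorph_source
  have f_an : AnalyticAt ℝ f w₀ := (analyticAt_id.mul analyticAt_rexp)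
  obtain ⟨p, hp⟩ := f_an
  have hΦp : HasFPowerSeriesAt (↑Φ) p w₀ := by rw [hΦcoe]; exact hp
  have hp1 : p 1 = (continuousMultilinearCurryFin1 ℝ ℝ ℝ).symm
      ↑(ContinuousLinearEquiv.unitsEquivAut ℝ (Units.mk0 c hcne)) := by
    have hd1 := hp.hasFDerivAt
    have hd2 := hF.hasFDerivAt
    have heq : (continuousMultilinearCurryFin1 ℝ ℝ ℝ) (p 1)
        = ↑(ContinuousLinearEquiv.unitsEquivAut ℝ (Units.mk0 c hcne)) := hd1.unique hd2
    have := congrArg (continuousMultilinearCurryFin1 ℝ ℝ ℝ).symm heq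
    simpa using this
  have hsym := Φ.hasFPowerSeriesAt_symm hmem hΦp hp1
  have hfw : f w₀ = z₀ := h₁
  have han : AnalyticAt ℝ Φ.symm z₀ := by
    rw [hΦcoe, hfw] at hsym
    exact ⟨_, hsym⟩
  refine han.congr ?_
  -- show Φ.symm =ᶠ[𝓝 z₀] W
  have htmem : z₀ ∈ Φ.target := by
    have := hF.image_mem_toOpenPartialHomeomorph_target
    rwa [hfw] at this
  have hA : ∀ᶠ z in 𝓝 z₀, z ∈ Φ.target := Φ.open_target.mem_nhds htmem
  have hsymm_cont : ContinuousAt Φ.symm z₀ := Φ.continuousAt_symm htmem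
  have hsymm_z₀ : Φ.symm z₀ = w₀ := by
    have := Φ.left_inv hmem
    rw [hΦcoe, hfw] at this
    exact this
  have hB : ∀ᶠ z in 𝓝 z₀, Φ.symm z ∈ Set.Ioi (-1 : ℝ) := by
    refine hsymm_cont.eventually_mem ?_
    rw [hsymm_z₀]
    exact isOpen_Ioi.mem_nhds h₃
  have hC : ∀ᶠ z in 𝓝 z₀, -Real.exp (-1) < z := eventually_gt_nhds hz
  filter_upwards [hA, hB, hC] with z hzA hzB hzC
  -- f (Φ.symm z) = z and f (W z) = z with both args in Ici (-1)
  have hr : f (Φ.symm z) = z := by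
    have := Φ.right_inv hzA
    rwa [hΦcoe] at this
  obtain ⟨hWz1, hWz2⟩ := hW z hzC.le
  have hWf : f (W z) = z := hWz1
  have hinj := f_strictMonoOn.injOn
  exact hinj (Set.mem_Ici.2 (le_of_lt hzB)) hWz2 (hr.trans hWf.symm)

lemma v_facts (W : ℝ → ℝ)
    (hW : ∀ z : ℝ, -Real.exp (-1) ≤ z → W z * Real.exp (W z) = z ∧ -1 ≤ W z)
    (v : ℝ → ℝ) (hv : ∀ x, v x = W (Real.exp (1 - x) * (2 - x))) :
    ∀ x : ℝ, 3 ≤ x → v x < 0 ∧ -1 ≤ v x ∧ -v x ≤ Real.exp (2 - x) * (x - 2) := by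
  intro x hx
  obtain ⟨h1, h2⟩ := hW _ (g_gt x).le
  rw [← hv x] at h1 h2
  have hgneg : Real.exp (1 - x) * (2 - x) < 0 := by
    have h2x : (2:ℝ) - x < 0 := by linarith
    have := Real.exp_pos (1 - x)
    nlinarith
  have hvneg : v x < 0 := by
    by_contra h
    push_neg at h
    nlinarith [Real.exp_pos (v x)]
  refine ⟨hvneg, h2, ?_⟩
  have hexp : Real.exp (-(v x)) ≤ Real.exp 1 := Real.exp_le_exp.2 (by linarith)
  have hv_eq : v x = Real.exp (1 - x) * (2 - x) * Real.exp (-(v x)) := by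
    calc v x = v x * (Real.exp (v x) * Real.exp (-(v x))) := by
          rw [← Real.exp_add]; simp
      _ = v x * Real.exp (v x) * Real.exp (-(v x)) := by ring
      _ = Real.exp (1 - x) * (2 - x) * Real.exp (-(v x)) := by rw [h1]
  have hneg : -v x = Real.exp (1 - x) * (x - 2) * Real.exp (-(v x)) := by
    rw [show Real.exp (1 - x) * (x - 2) * Real.exp (-(v x))
        = -(Real.exp (1 - x) * (2 - x) * Real.exp (-(v x))) by ring, ← hv_eq]
  rw [hneg]
  have h2x : (0:ℝ) ≤ x - 2 := by linarith
  calc Real.exp (1 - x) * (x - 2) * Real.exp (-(v x))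
      ≤ Real.exp (1 - x) * (x - 2) * Real.exp 1 := by
        refine mul_le_mul_of_nonneg_left hexp (by positivity)
    _ = Real.exp (2 - x) * (x - 2) := by
        rw [show (2:ℝ) - x = (1 - x) + 1 by ring, Real.exp_add]; ring

lemma analyticAt_v (W : ℝ → ℝ)
    (hW : ∀ z : ℝ, -Real.exp (-1) ≤ z → W z * Real.exp (W z) = z ∧ -1 ≤ W z)
    (v : ℝ → ℝ) (hv : ∀ x, v x = W (Real.exp (1 - x) * (2 - x))) (x : ℝ) :
    AnalyticAt ℝ v x := by
  have hg : AnalyticAt ℝ (fun y : ℝ => Real.exp (1 - y) * (2 - y)) x := by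
    exact (analyticAt_rexp.comp (analyticAt_const.sub analyticAt_id)).mul
      (analyticAt_const.sub analyticAt_id)
  have hWan : AnalyticAt ℝ W (Real.exp (1 - x) * (2 - x)) := analyticAt_W W hW (g_gt x)
  have hWg : AnalyticAt ℝ (fun y => W (Real.exp (1 - y) * (2 - y))) x := AnalyticAt.comp (g := W)
    (f := fun y : ℝ => Real.exp (1 - y) * (2 - y)) (x := x) hWan hg
  exact hWg.congr (Filter.Eventually.of_forall fun y => (hv y).symm)

lemma analyticAt_evalP (v : ℝ → ℝ) (hva : ∀ x, AnalyticAt ℝ v x)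
    (P : MvPolynomial (Fin 2) ℝ) (x : ℝ) :
    AnalyticAt ℝ (fun y => MvPolynomial.eval ![y, v y] P) x := by
  induction P using MvPolynomial.induction_on with
  | C a => simp only [MvPolynomial.eval_C]; exact analyticAt_const
  | add p q hp hq => simp only [map_add]; exact hp.add hq
  | mul_X p i hp =>
    simp only [map_mul, MvPolynomial.eval_X]
    fin_cases i
    · simpa using hp.fun_mul analyticAt_id
    · simpa [Matrix.cons_val_one, Matrix.head_cons] using hp.fun_mul (hva x)

lemma core (W : ℝ → ℝ)
    (hW : ∀ z : ℝ, -Real.exp (-1) ≤ z → W z * Real.exp (W z) = z ∧ -1 ≤ W z)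
    (v : ℝ → ℝ) (hv : ∀ x, v x = W (Real.exp (1 - x) * (2 - x)))
    (P : MvPolynomial (Fin 2) ℝ) (z₀ : ℝ)
    (hfreq : ∃ᶠ x in 𝓝[≠] z₀, MvPolynomial.eval ![x, v x] P = 0) : P = 0 := by
  have hva : ∀ x, AnalyticAt ℝ v x := analyticAt_v W hW v hv
  have hFan : AnalyticOnNhd ℝ (fun y => MvPolynomial.eval ![y, v y] P) Set.univ :=
    fun y _ => analyticAt_evalP v hva P y
  have hzero : ∀ x : ℝ, MvPolynomial.eval ![x, v x] P = 0 := by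
    have := hFan.eqOn_zero_of_preconnected_of_frequently_eq_zero isPreconnected_univ
      (Set.mem_univ z₀) hfreq
    intro x
    exact this (Set.mem_univ x)
  set toQ : MvPolynomial (Fin 2) ℝ →+* Polynomial (Polynomial ℝ) :=
    MvPolynomial.eval₂Hom ((Polynomial.C).comp (Polynomial.C))
      ![Polynomial.C Polynomial.X, Polynomial.X] with htoQ
  have heval : ∀ x : ℝ, Polynomial.eval (v x) ((toQ P).map (Polynomial.evalRingHom x))
      = MvPolynomial.eval ![x, v x] P := by
    intro x
    have hhom : ((Polynomial.evalRingHom (v x)).comp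
        ((Polynomial.mapRingHom (Polynomial.evalRingHom x)).comp toQ))
        = (MvPolynomial.eval ![x, v x] : MvPolynomial (Fin 2) ℝ →+* ℝ) := by
      apply MvPolynomial.ringHom_ext
      · intro a; simp [htoQ]
      · intro i; fin_cases i <;> simp [htoQ]
    exact RingHom.congr_fun hhom P
  have hQ0 : toQ P = 0 :=
    key v (v_facts W hW v hv) (toQ P).natDegree (toQ P) le_rfl
      (fun x hx => by rw [heval x]; exact hzero x)
  have hback : (Polynomial.eval₂RingHom
      (Polynomial.eval₂RingHom (MvPolynomial.C) (MvPolynomial.X 0)) (MvPolynomial.X 1)).comp toQ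
      = RingHom.id (MvPolynomial (Fin 2) ℝ) := by
    apply MvPolynomial.ringHom_ext
    · intro a; simp [htoQ]
    · intro i; fin_cases i <;> simp [htoQ]
  have hPP := RingHom.congr_fun hback P
  rw [RingHom.comp_apply, hQ0, map_zero, RingHom.id_apply] at hPP
  exact hPP.symm


end LambertAux

/-- The function v(x) = W(e^{1−x}(2−x)), where W is the principal branch of the
    Lambert W function (characterized by W(z)·e^{W(z)} = z and W(z) ≥ −1 on
    [−1/e, ∞)), satisfies no non-trivial polynomial relation on any interval
    [0, r); consequently its graph over [0, r) is not semialgebraic. -/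
theorem lambert_not_semialgebraic
    (W : ℝ → ℝ)
    (hW : ∀ z : ℝ, -Real.exp (-1) ≤ z → W z * Real.exp (W z) = z ∧ -1 ≤ W z)
    (v : ℝ → ℝ) (hv : ∀ x, v x = W (Real.exp (1 - x) * (2 - x)))
    (r : ℝ) (hr : 0 < r) :
    (¬ ∃ P : MvPolynomial (Fin 2) ℝ, P ≠ 0 ∧
        ∀ x ∈ Set.Ico (0 : ℝ) r, MvPolynomial.eval ![x, v x] P = 0) ∧
    ¬ IsSemialgebraic {x : Fin 2 → ℝ | x 0 ∈ Set.Ico (0 : ℝ) r ∧ x 1 = v (x 0)} := by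
  constructor
  · rintro ⟨P, hP0, hPz⟩
    apply hP0
    apply LambertAux.core W hW v hv P (r / 2)
    have hmem : Set.Ico (0:ℝ) r ∈ 𝓝 (r / 2) := by
      refine mem_nhds_iff.2 ⟨Set.Ioo 0 r, fun y hy => ⟨hy.1.le, hy.2⟩, isOpen_Ioo,
        ⟨by linarith, by linarith⟩⟩
    have hev : ∀ᶠ x in 𝓝[≠] (r / 2), MvPolynomial.eval ![x, v x] P = 0 := by
      refine Filter.Eventually.filter_mono nhdsWithin_le_nhds ?_
      filter_upwards [hmem] with x hx using hPz x hx
    exact hev.frequently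
  · rintro ⟨k, t, hbasic, hcover⟩
    set A : Fin k → Set ℝ := fun i => {x | x ∈ Set.Ico (0:ℝ) r ∧ ![x, v x] ∈ t i} with hA
    have hcov : Set.Ico (0:ℝ) r ⊆ ⋃ i, A i := by
      intro x hx
      have hxg : ![x, v x] ∈ {y : Fin 2 → ℝ | y 0 ∈ Set.Ico (0:ℝ) r ∧ y 1 = v (y 0)} := by
        constructor <;> simp [hx]
      rw [hcover] at hxg
      obtain ⟨i, hi⟩ := Set.mem_iUnion.1 hxg
      exact Set.mem_iUnion.2 ⟨i, ⟨hx, hi⟩⟩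
    have hinf : (Set.Ico (0:ℝ) r).Infinite := Set.Ico_infinite hr
    have hex : ∃ i, (A i).Infinite := by
      by_contra h
      push_neg at h
      exact hinf (Set.Finite.subset (Set.finite_iUnion h) hcov)
    obtain ⟨i, hAinf⟩ := hex
    obtain ⟨p, m, gs, ht⟩ := hbasic i
    have hsub : A i ⊆ Set.Icc 0 r := fun x hx => ⟨hx.1.1, hx.1.2.le⟩
    obtain ⟨z₀, hz₀K, hacc⟩ := hAinf.exists_accPt_of_subset_isCompact isCompact_Icc hsub
    have hfreq : ∃ᶠ x in 𝓝[≠] z₀, MvPolynomial.eval ![x, v x] p = 0 := by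
      have hfr := accPt_iff_frequently.1 hacc
      rw [frequently_nhdsWithin_iff]
      refine hfr.mono ?_
      rintro y ⟨hy1, hy2⟩
      have hyt : ![y, v y] ∈ t i := hy2.2
      rw [ht] at hyt
      exact ⟨hyt.1, hy1⟩
    have hp0 : p = 0 := LambertAux.core W hW v hv p z₀ hfreq
    have hopen : IsOpen (t i) := by
      rw [ht, hp0]
      have hre : {x : Fin 2 → ℝ | MvPolynomial.eval x (0 : MvPolynomial (Fin 2) ℝ) = 0 ∧
          ∀ j, 0 < MvPolynomial.eval x (gs j)}
          = ⋂ j, {x : Fin 2 → ℝ | 0 < MvPolynomial.eval x (gs j)} := by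
        ext y; simp
      rw [hre]
      exact isOpen_iInter_of_finite fun j =>
        isOpen_lt continuous_const (MvPolynomial.continuous_eval (p := gs j))
    obtain ⟨x₀, hx₀⟩ := hAinf.nonempty
    have hy₀ : ![x₀, v x₀] ∈ t i := hx₀.2
    set u : ℝ → (Fin 2 → ℝ) := fun ε => ![x₀, v x₀ + ε] with hu
    have hucont : Continuous u := by
      apply continuous_pi
      intro j
      fin_cases j
      · simpa [hu] using continuous_const
      · simpa [hu] using continuous_const.fun_add continuous_id
    have hu0 : u 0 = ![x₀, v x₀] := by
      funext j; fin_cases j <;> simp [hu]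
    have hnb : u ⁻¹' t i ∈ 𝓝 (0:ℝ) := (hopen.preimage hucont).mem_nhds
      (by rw [Set.mem_preimage, hu0]; exact hy₀)
    have hev2 : ∀ᶠ ε in 𝓝[≠] (0:ℝ), u ε ∈ t i ∧ ε ≠ 0 := by
      refine Filter.Eventually.and ?_ ?_
      · exact Filter.Eventually.filter_mono nhdsWithin_le_nhds hnb
      · exact eventually_mem_nhdsWithin
    obtain ⟨ε, huε, hεne⟩ := hev2.exists
    have hmem2 := Set.mem_iUnion.2 ⟨i, huε⟩
    rw [← hcover] at hmem2
    have h1 : v x₀ + ε = v x₀ := by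
      have := hmem2.2
      simpa [hu] using this
    exact hεne (by linarith)
end
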